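/- Let ℓ > 0 and let g : [0,∞) → [0,∞] be measurable. Then ∫_{a ∈ ℝ×(0,∞)} ∫_{b ∈ D(ℓ,a)} g(|a−b|) db da = 2ℓ ∫_0^∞ r² g(r) dr, where for a point a in the open upper half-plane, D(ℓ,a) := { b ∈ ℝ² : the segment [a,b] meets the segment [(0,0),(ℓ,0)] }, and both outer integrals are with respect to Lebesgue measure on ℝ². -/

import Mathlib

open MeasureTheory Set
open scoped ENNReal


noncomputable def stmt0ψ : EuclideanSpace ℝ (Fin 2) ≃ᵐ ℝ × ℝ :=
  (MeasurableEquiv.toLp 2 (Fin 2 → ℝ)).symm.trans MeasurableEquiv.finTwoArrow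

lemma stmt0hψ : MeasurePreserving stmt0ψ volume volume :=
  (MeasureTheory.volume_preserving_finTwoArrow ℝ).comp
    (EuclideanSpace.volume_preserving_symm_measurableEquiv_toLp (Fin 2))

lemma stmt0_transfer (s : Set (EuclideanSpace ℝ (Fin 2))) (hs : MeasurableSet s)
    (f : EuclideanSpace ℝ (Fin 2) → ℝ≥0∞) :
    ∫⁻ a in s, f a ∂volume = ∫⁻ p in stmt0ψ.symm ⁻¹' s, f (stmt0ψ.symm p) ∂volume := by
  conv_lhs => rw [← (stmt0hψ.symm stmt0ψ).map_eq]
  rw [Measure.restrict_map stmt0ψ.symm.measurable hs]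
  exact lintegral_map_equiv f stmt0ψ.symm

lemma stmt0_null : volume {b : EuclideanSpace ℝ (Fin 2) | b 1 = 0} = 0 := by
  have h : {b : EuclideanSpace ℝ (Fin 2) | b 1 = 0} =
      stmt0ψ ⁻¹' ((univ : Set ℝ) ×ˢ ({0} : Set ℝ)) := by
    ext b
    simp only [mem_setOf_eq, mem_preimage, mem_prod, mem_univ, true_and, mem_singleton_iff]
    exact Iff.rfl
  rw [h, stmt0hψ.measure_preimage
    (MeasurableSet.univ.prod (measurableSet_singleton 0)).nullMeasurableSet,
    Measure.volume_eq_prod, Measure.prod_prod, Real.volume_singleton, mul_zero]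

lemma stmt0_seg_iff (ℓ : ℝ) (hℓ : 0 < ℓ) (a b : EuclideanSpace ℝ (Fin 2))
    (ha : 0 < a 1) (hb : b 1 < 0) :
    (segment ℝ a b ∩ segment ℝ 0 (EuclideanSpace.single 0 ℓ)).Nonempty ↔
      0 ≤ a 1 * b 0 - b 1 * a 0 ∧ a 1 * b 0 - b 1 * a 0 ≤ ℓ * (a 1 - b 1) := by
  have hd : 0 < a 1 - b 1 := by linarith
  constructor
  · rintro ⟨z, ⟨u, v, hu, hv, huv, hz⟩, ⟨u', v', hu', hv', huv', hz'⟩⟩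
    have hz1 : u * a 1 + v * b 1 = z 1 := by
      rw [← hz]; simp [PiLp.add_apply, PiLp.smul_apply, smul_eq_mul]
    have hz0 : u * a 0 + v * b 0 = z 0 := by
      rw [← hz]; simp [PiLp.add_apply, PiLp.smul_apply, smul_eq_mul]
    have hz1' : z 1 = 0 := by
      rw [← hz']; simp [PiLp.add_apply, PiLp.smul_apply, smul_eq_mul,
        EuclideanSpace.single_apply]
    have hz0' : z 0 = v' * ℓ := by
      rw [← hz']; simp [PiLp.add_apply, PiLp.smul_apply, smul_eq_mul,
        EuclideanSpace.single_apply]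
    have hv'le : v' ≤ 1 := by linarith
    have hveq : v = a 1 / (a 1 - b 1) := by
      have : u = 1 - v := by linarith
      rw [this] at hz1
      field_simp
      nlinarith [hz1.trans hz1']
    have hueq : u = -b 1 / (a 1 - b 1) := by
      rw [hveq] at huv; field_simp at huv ⊢; linarith
    have hz0v : z 0 = (a 1 * b 0 - b 1 * a 0) / (a 1 - b 1) := by
      rw [← hz0, hueq, hveq]; field_simp; ring
    constructor
    · have h1 : 0 ≤ z 0 := by rw [hz0']; positivity
      rw [hz0v] at h1
      rw [le_div_iff₀ hd] at h1; linarith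
    · have h2 : z 0 ≤ ℓ := by rw [hz0']; nlinarith
      rw [hz0v] at h2
      rw [div_le_iff₀ hd] at h2
      linarith [h2]
  · rintro ⟨h1, h2⟩
    set w := a 1 * b 0 - b 1 * a 0 with hw
    refine ⟨(-b 1 / (a 1 - b 1)) • a + (a 1 / (a 1 - b 1)) • b, ⟨-b 1 / (a 1 - b 1),
      a 1 / (a 1 - b 1), div_nonneg (by linarith) hd.le, div_nonneg ha.le hd.le, by field_simp; ring, rfl⟩,
      ⟨1 - w / ((a 1 - b 1) * ℓ), w / ((a 1 - b 1) * ℓ), ?_, div_nonneg h1 (by positivity), by ring, ?_⟩⟩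
    · have : w / ((a 1 - b 1) * ℓ) ≤ 1 := by
        rw [div_le_one (by positivity)]; linarith
      linarith
    · ext i
      fin_cases i <;>
        simp [PiLp.add_apply, PiLp.smul_apply, smul_eq_mul, EuclideanSpace.single_apply] <;>
        field_simp <;> ring

lemma stmt0_seg_empty (ℓ : ℝ) (a b : EuclideanSpace ℝ (Fin 2))
    (ha : 0 < a 1) (hb : 0 < b 1) :
    ¬ (segment ℝ a b ∩ segment ℝ 0 (EuclideanSpace.single 0 ℓ)).Nonempty := by
  rintro ⟨z, ⟨u, v, hu, hv, huv, hz⟩, ⟨u', v', hu', hv', huv', hz'⟩⟩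
  have hz1 : u * a 1 + v * b 1 = z 1 := by
    rw [← hz]; simp [PiLp.add_apply, PiLp.smul_apply, smul_eq_mul]
  have hz1' : z 1 = 0 := by
    rw [← hz']; simp [PiLp.add_apply, PiLp.smul_apply, smul_eq_mul,
      EuclideanSpace.single_apply]
  rcases eq_or_lt_of_le hu with h | h
  · have hv1 : v = 1 := by linarith
    nlinarith [hz1.trans hz1']
  · nlinarith [hz1.trans hz1', mul_pos h ha, mul_nonneg hv hb.le]

lemma stmt0_lint_image {s : Set ℝ} {f f' : ℝ → ℝ} (hs : MeasurableSet s)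
    (hf' : ∀ x ∈ s, HasDerivWithinAt f (f' x) s x) (hf : InjOn f s) (g : ℝ → ℝ≥0∞) :
    ∫⁻ x in f '' s, g x = ∫⁻ x in s, ENNReal.ofReal |f' x| * g (f x) := by
  simpa only [ContinuousLinearMap.det_toSpanSingleton] using
    lintegral_image_eq_lintegral_abs_det_fderiv_mul volume hs
      (fun x hx => (hf' x hx).hasFDerivWithinAt) hf g

lemma stmt0_mySlice (g : ℝ → ℝ≥0∞) (x : ℝ) :
    ∫⁻ y in Iio (0:ℝ), ENNReal.ofReal (-y) * g (Real.sqrt (x^2 + y^2)) =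
      ∫⁻ r in Ioi |x|, ENNReal.ofReal r * g r := by
  have himg : (fun y => Real.sqrt (x^2 + y^2)) '' Iio 0 = Ioi |x| := by
    ext r
    constructor
    · rintro ⟨y, hy, rfl⟩
      have hy' : y < 0 := hy
      have h0 : x^2 < x^2 + y^2 := by nlinarith
      have : Real.sqrt (x^2) < Real.sqrt (x^2 + y^2) :=
        Real.sqrt_lt_sqrt (sq_nonneg x) h0
      simpa [Real.sqrt_sq_eq_abs] using this
    · intro hr
      have hr' : |x| < r := hr
      have hrpos : 0 < r := lt_of_le_of_lt (abs_nonneg x) hr'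
      have h1 : 0 ≤ r^2 - x^2 := by nlinarith [sq_abs x, abs_nonneg x]
      have h2 : 0 < r^2 - x^2 := by nlinarith [sq_abs x, abs_nonneg x]
      refine ⟨-Real.sqrt (r^2 - x^2), by simpa using Real.sqrt_pos.2 h2, ?_⟩
      have : x^2 + (-Real.sqrt (r^2 - x^2))^2 = r^2 := by
        rw [neg_sq, Real.sq_sqrt h1]; ring
      show Real.sqrt (x^2 + (-Real.sqrt (r^2 - x^2))^2) = r
      rw [this, Real.sqrt_sq hrpos.le]
  rw [← himg, stmt0_lint_image (f' := fun y => y / Real.sqrt (x^2 + y^2)) measurableSet_Iio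
    (fun y hy => ?_) (fun y1 h1 y2 h2 h => ?_) (fun r => ENNReal.ofReal r * g r)]
  · refine setLIntegral_congr_fun measurableSet_Iio (fun y hy => ?_) |>.symm
    have hy' : y < 0 := hy
    have hs : 0 < Real.sqrt (x^2 + y^2) := Real.sqrt_pos.2 (by nlinarith)
    rw [← mul_assoc, ← ENNReal.ofReal_mul (by positivity), abs_div, abs_of_pos hs,
      div_mul_cancel₀ _ hs.ne', abs_of_neg hy']
  · -- derivative
    have hpos : (0:ℝ) < x^2 + y^2 := by have : y < 0 := hy; nlinarith
    have h1 : HasDerivAt (fun y : ℝ => x^2 + y^2) (2*y) y := by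
      simpa using ((hasDerivAt_pow 2 y).const_add (x^2))
    have h2 := h1.sqrt hpos.ne'
    have : (2*y) / (2 * Real.sqrt (x^2 + y^2)) = y / Real.sqrt (x^2 + y^2) := by
      rw [mul_div_mul_left _ _ (two_ne_zero)]
    rw [this] at h2
    exact h2.hasDerivWithinAt
  · -- injectivity
    have e1 : x^2 + y1^2 = x^2 + y2^2 := by
      have := congrArg (fun t => t^2) h
      simpa [Real.sq_sqrt (by positivity : (0:ℝ) ≤ x^2 + y1^2),
        Real.sq_sqrt (by positivity : (0:ℝ) ≤ x^2 + y2^2)] using this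
    have h1' : y1 < 0 := h1
    have h2' : y2 < 0 := h2
    have hz : (y1 - y2) * (y1 + y2) = 0 := by nlinarith
    rcases mul_eq_zero.mp hz with h | h
    · linarith
    · linarith

lemma stmt0_Kcalc (g : ℝ → ℝ≥0∞) (hg : Measurable g) :
    ∫⁻ v in {v : ℝ × ℝ | v.2 < 0}, ENNReal.ofReal (-v.2) * g (Real.sqrt (v.1^2 + v.2^2)) =
      2 * ∫⁻ r in Ioi (0:ℝ), ENNReal.ofReal (r^2) * g r := by
  have hset : {v : ℝ × ℝ | v.2 < 0} = (univ : Set ℝ) ×ˢ Iio 0 := by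
    ext v; simp [Set.mem_prod]
  rw [hset, MeasureTheory.Measure.volume_eq_prod, ← Measure.prod_restrict,
    Measure.restrict_univ]
  rw [lintegral_prod _ ((by fun_prop : Measurable fun v : ℝ × ℝ =>
    ENNReal.ofReal (-v.2) * g (Real.sqrt (v.1^2 + v.2^2))).aemeasurable)]
  simp only [stmt0_mySlice g]
  -- now ∫⁻ x, ∫⁻ r in Ioi |x|, ofReal r * g r
  have step : ∀ x : ℝ, ∫⁻ r in Ioi |x|, ENNReal.ofReal r * g r =
      ∫⁻ r, {q : ℝ × ℝ | |q.1| < q.2}.indicator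
        (fun q => ENNReal.ofReal q.2 * g q.2) (x, r) := by
    intro x
    rw [← lintegral_indicator measurableSet_Ioi]
    refine lintegral_congr fun r => ?_
    by_cases h : |x| < r <;> simp [indicator, h, Set.mem_Ioi, mem_setOf_eq]
  simp only [step]
  rw [lintegral_lintegral_swap]
  · have inner : ∀ r : ℝ, (∫⁻ x, {q : ℝ × ℝ | |q.1| < q.2}.indicator
        (fun q => ENNReal.ofReal q.2 * g q.2) (x, r) ∂volume) =
        (ENNReal.ofReal r * g r) * ENNReal.ofReal (r - -r) := by
      intro r
      have : ∀ x : ℝ, {q : ℝ × ℝ | |q.1| < q.2}.indicator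
          (fun q => ENNReal.ofReal q.2 * g q.2) (x, r) =
          (Ioo (-r) r).indicator (fun _ => ENNReal.ofReal r * g r) x := by
        intro x
        by_cases h : |x| < r
        · have hx : x ∈ Ioo (-r) r := by
            rcases abs_lt.mp h with ⟨h1, h2⟩; exact ⟨h1, h2⟩
          simp [indicator, h, hx]
        · have hx : x ∉ Ioo (-r) r := by
            intro hx; exact h (abs_lt.mpr ⟨hx.1, hx.2⟩)
          simp [indicator, h, hx]
      simp only [this]
      rw [lintegral_indicator_const measurableSet_Ioo, Real.volume_Ioo, mul_comm]
    simp only [inner]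
    have key : ∀ r : ℝ, (ENNReal.ofReal r * g r) * ENNReal.ofReal (r - -r) =
        (Ioi (0:ℝ)).indicator (fun r => 2 * (ENNReal.ofReal (r^2) * g r)) r := by
      intro r
      by_cases hr : 0 < r
      · have : r - -r = 2 * r := by ring
        rw [this, ENNReal.ofReal_mul zero_le_two, ENNReal.ofReal_ofNat,
          indicator_of_mem (by exact hr)]
        rw [pow_two, ENNReal.ofReal_mul hr.le]
        ring
      · rw [indicator_of_notMem (by simpa using hr),
          ENNReal.ofReal_eq_zero.2 (le_of_not_gt hr), zero_mul, zero_mul]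
    simp only [key]
    rw [lintegral_indicator measurableSet_Ioi,
      lintegral_const_mul _ (by fun_prop : Measurable fun r : ℝ => ENNReal.ofReal (r^2) * g r)]
  · apply Measurable.aemeasurable
    apply Measurable.indicator
    · fun_prop
    · exact measurableSet_lt (by fun_prop) (by fun_prop)

lemma stmt0_Jcalc (ℓ : ℝ) (hℓ : 0 < ℓ) (v : ℝ × ℝ) :
    ∫⁻ p : ℝ × ℝ, Set.indicator {p : ℝ × ℝ | 0 < p.2 ∧ p.2 < -v.2 ∧
        0 ≤ p.2 * v.1 - p.1 * v.2 ∧ p.2 * v.1 - p.1 * v.2 ≤ -(ℓ * v.2)}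
      (fun _ => (1:ℝ≥0∞)) p =
    {w : ℝ × ℝ | w.2 < 0}.indicator
      (fun w => ENNReal.ofReal ℓ * ENNReal.ofReal (-w.2)) v := by
  have hSm : MeasurableSet {p : ℝ × ℝ | 0 < p.2 ∧ p.2 < -v.2 ∧
      0 ≤ p.2 * v.1 - p.1 * v.2 ∧ p.2 * v.1 - p.1 * v.2 ≤ -(ℓ * v.2)} := by
    have heq : {p : ℝ × ℝ | 0 < p.2 ∧ p.2 < -v.2 ∧
        0 ≤ p.2 * v.1 - p.1 * v.2 ∧ p.2 * v.1 - p.1 * v.2 ≤ -(ℓ * v.2)} =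
        {p : ℝ × ℝ | 0 < p.2} ∩ ({p : ℝ × ℝ | p.2 < -v.2} ∩
          ({p : ℝ × ℝ | 0 ≤ p.2 * v.1 - p.1 * v.2} ∩
            {p : ℝ × ℝ | p.2 * v.1 - p.1 * v.2 ≤ -(ℓ * v.2)})) := rfl
    rw [heq]
    exact (measurableSet_lt measurable_const measurable_snd).inter
      ((measurableSet_lt measurable_snd measurable_const).inter
        ((measurableSet_le measurable_const (by fun_prop)).inter
          (measurableSet_le (by fun_prop) measurable_const)))
  by_cases hv : v.2 < 0
  · have hcpos : 0 < -v.2 := by linarith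
    rw [indicator_of_mem (by exact hv)]
    rw [MeasureTheory.Measure.volume_eq_prod,
      lintegral_prod _ ((measurable_const.indicator hSm).aemeasurable)]
    rw [lintegral_lintegral_swap (f := fun x y => Set.indicator {p : ℝ × ℝ | 0 < p.2 ∧
        p.2 < -v.2 ∧ 0 ≤ p.2 * v.1 - p.1 * v.2 ∧ p.2 * v.1 - p.1 * v.2 ≤ -(ℓ * v.2)}
      (fun _ => (1:ℝ≥0∞)) (x, y)) ((measurable_const.indicator hSm).aemeasurable)]
    have inner : ∀ y : ℝ, (∫⁻ x, Set.indicator {p : ℝ × ℝ | 0 < p.2 ∧ p.2 < -v.2 ∧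
        0 ≤ p.2 * v.1 - p.1 * v.2 ∧ p.2 * v.1 - p.1 * v.2 ≤ -(ℓ * v.2)}
        (fun _ => (1:ℝ≥0∞)) (x, y)) =
        (Ioo 0 (-v.2)).indicator (fun _ => ENNReal.ofReal ℓ) y := by
      intro y
      by_cases hy : y ∈ Ioo 0 (-v.2)
      · rw [indicator_of_mem hy]
        have hset : ∀ x : ℝ, (x, y) ∈ {p : ℝ × ℝ | 0 < p.2 ∧ p.2 < -v.2 ∧
            0 ≤ p.2 * v.1 - p.1 * v.2 ∧ p.2 * v.1 - p.1 * v.2 ≤ -(ℓ * v.2)} ↔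
            x ∈ Icc (-(y * v.1) / -v.2) (-(y * v.1) / -v.2 + ℓ) := by
          intro x
          simp only [mem_setOf_eq, mem_Icc]
          constructor
          · rintro ⟨-, -, h3, h4⟩
            constructor
            · rw [div_le_iff₀ hcpos]; nlinarith [h3]
            · rw [← sub_le_iff_le_add, le_div_iff₀ hcpos]; nlinarith [h4]
          · rintro ⟨h3, h4⟩
            refine ⟨hy.1, hy.2, ?_, ?_⟩
            · rw [div_le_iff₀ hcpos] at h3; nlinarith [h3]
            · rw [← sub_le_iff_le_add, le_div_iff₀ hcpos] at h4; nlinarith [h4]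
        calc ∫⁻ x, Set.indicator {p : ℝ × ℝ | 0 < p.2 ∧ p.2 < -v.2 ∧
              0 ≤ p.2 * v.1 - p.1 * v.2 ∧ p.2 * v.1 - p.1 * v.2 ≤ -(ℓ * v.2)}
              (fun _ => (1:ℝ≥0∞)) (x, y)
            = ∫⁻ x, (Icc (-(y * v.1) / -v.2) (-(y * v.1) / -v.2 + ℓ)).indicator
              (fun _ => (1:ℝ≥0∞)) x := by
              refine lintegral_congr fun x => ?_
              by_cases h : (x, y) ∈ {p : ℝ × ℝ | 0 < p.2 ∧ p.2 < -v.2 ∧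
                  0 ≤ p.2 * v.1 - p.1 * v.2 ∧ p.2 * v.1 - p.1 * v.2 ≤ -(ℓ * v.2)}
              · rw [indicator_of_mem h, indicator_of_mem ((hset x).mp h)]
              · rw [indicator_of_notMem h,
                  indicator_of_notMem (fun hx => h ((hset x).mpr hx))]
          _ = ENNReal.ofReal ℓ := by
              rw [lintegral_indicator_const measurableSet_Icc, Real.volume_Icc]
              simp
      · rw [indicator_of_notMem hy]
        have hnot : ∀ x : ℝ, (x, y) ∉ {p : ℝ × ℝ | 0 < p.2 ∧ p.2 < -v.2 ∧
            0 ≤ p.2 * v.1 - p.1 * v.2 ∧ p.2 * v.1 - p.1 * v.2 ≤ -(ℓ * v.2)} := by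
          intro x hx
          exact hy ⟨hx.1, hx.2.1⟩
        calc (∫⁻ x, Set.indicator {p : ℝ × ℝ | 0 < p.2 ∧ p.2 < -v.2 ∧
              0 ≤ p.2 * v.1 - p.1 * v.2 ∧ p.2 * v.1 - p.1 * v.2 ≤ -(ℓ * v.2)}
              (fun _ => (1:ℝ≥0∞)) (x, y))
            = ∫⁻ _ : ℝ, 0 := lintegral_congr fun x => indicator_of_notMem (hnot x) _
          _ = 0 := lintegral_zero
    simp only [inner]
    rw [lintegral_indicator_const measurableSet_Ioo, Real.volume_Ioo]
    simp
  · rw [indicator_of_notMem (by exact hv)]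
    have hnot : ∀ p : ℝ × ℝ, p ∉ {p : ℝ × ℝ | 0 < p.2 ∧ p.2 < -v.2 ∧
        0 ≤ p.2 * v.1 - p.1 * v.2 ∧ p.2 * v.1 - p.1 * v.2 ≤ -(ℓ * v.2)} := by
      intro p hp
      have h1 := hp.1
      have h2 := hp.2.1
      push_neg at hv
      linarith
    calc ∫⁻ p : ℝ × ℝ, Set.indicator {p : ℝ × ℝ | 0 < p.2 ∧ p.2 < -v.2 ∧
          0 ≤ p.2 * v.1 - p.1 * v.2 ∧ p.2 * v.1 - p.1 * v.2 ≤ -(ℓ * v.2)}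
          (fun _ => (1:ℝ≥0∞)) p
        = ∫⁻ _ : ℝ × ℝ, 0 := lintegral_congr fun p => indicator_of_notMem (hnot p) _
      _ = 0 := lintegral_zero


lemma stmt0_dist_symm (p q : ℝ × ℝ) :
    dist (stmt0ψ.symm p) (stmt0ψ.symm q) = Real.sqrt ((p.1 - q.1)^2 + (p.2 - q.2)^2) := by
  rw [EuclideanSpace.dist_eq]
  simp only [Fin.sum_univ_two, Real.dist_eq, sq_abs]
  rfl

lemma stmt0_key (ℓ : ℝ) (hℓ : 0 < ℓ) (g : ℝ → ℝ≥0∞) (hg : Measurable g)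
    (p : ℝ × ℝ) (hp : 0 < p.2) :
    ∫⁻ b in {b : EuclideanSpace ℝ (Fin 2) |
        (segment ℝ (stmt0ψ.symm p) b ∩ segment ℝ 0 (EuclideanSpace.single 0 ℓ)).Nonempty},
      g (dist (stmt0ψ.symm p) b) =
    ∫⁻ w : ℝ × ℝ, Set.indicator {w : ℝ × ℝ | w.2 < -p.2 ∧ 0 ≤ p.2 * w.1 - p.1 * w.2 ∧
        p.2 * w.1 - p.1 * w.2 ≤ -(ℓ * w.2)}
      (fun w => g (Real.sqrt (w.1^2 + w.2^2))) w := by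
  set a : EuclideanSpace ℝ (Fin 2) := stmt0ψ.symm p with ha_def
  have ha : 0 < a 1 := hp
  -- the analytic description of the set, in E
  set D' : Set (EuclideanSpace ℝ (Fin 2)) := {b | b 1 < 0 ∧ 0 ≤ a 1 * b 0 - b 1 * a 0 ∧
    a 1 * b 0 - b 1 * a 0 ≤ ℓ * (a 1 - b 1)} with hD'
  have hTm : MeasurableSet {q : ℝ × ℝ | q.2 < 0 ∧ 0 ≤ p.2 * q.1 - q.2 * p.1 ∧
      p.2 * q.1 - q.2 * p.1 ≤ ℓ * (p.2 - q.2)} := by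
    have heq : {q : ℝ × ℝ | q.2 < 0 ∧ 0 ≤ p.2 * q.1 - q.2 * p.1 ∧
        p.2 * q.1 - q.2 * p.1 ≤ ℓ * (p.2 - q.2)} =
        {q : ℝ × ℝ | q.2 < 0} ∩ ({q : ℝ × ℝ | 0 ≤ p.2 * q.1 - q.2 * p.1} ∩
          {q : ℝ × ℝ | p.2 * q.1 - q.2 * p.1 ≤ ℓ * (p.2 - q.2)}) := rfl
    rw [heq]
    exact (measurableSet_lt measurable_snd measurable_const).inter
      ((measurableSet_le measurable_const (by fun_prop)).inter
        (measurableSet_le (by fun_prop) (by fun_prop)))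
  have hD'm : MeasurableSet D' := by
    have : D' = stmt0ψ ⁻¹' {q : ℝ × ℝ | q.2 < 0 ∧ 0 ≤ p.2 * q.1 - q.2 * p.1 ∧
        p.2 * q.1 - q.2 * p.1 ≤ ℓ * (p.2 - q.2)} := by
      ext b; exact Iff.rfl
    rw [this]
    exact stmt0ψ.measurable hTm
  -- a.e. equality of sets
  have hae : {b : EuclideanSpace ℝ (Fin 2) |
      (segment ℝ a b ∩ segment ℝ 0 (EuclideanSpace.single 0 ℓ)).Nonempty} =ᵐ[volume] D' := by
    rw [MeasureTheory.ae_eq_set]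
    constructor
    · apply measure_mono_null _ stmt0_null
      rintro b ⟨hb1, hb2⟩
      rcases lt_trichotomy (b 1) 0 with h | h | h
      · exact absurd ((stmt0_seg_iff ℓ hℓ a b ha h).mp hb1) (fun hx => hb2 ⟨h, hx⟩)
      · exact h
      · exact absurd hb1 (stmt0_seg_empty ℓ a b ha h)
    · have : D' \ {b : EuclideanSpace ℝ (Fin 2) |
          (segment ℝ a b ∩ segment ℝ 0 (EuclideanSpace.single 0 ℓ)).Nonempty} = ∅ := by
        ext b
        simp only [mem_diff, mem_setOf_eq, mem_empty_iff_false, iff_false, not_and, not_not]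
        rintro ⟨h1, h2, h3⟩
        exact (stmt0_seg_iff ℓ hℓ a b ha h1).mpr ⟨h2, h3⟩
      rw [this, measure_empty]
  rw [Measure.restrict_congr_set hae]
  rw [stmt0_transfer D' hD'm (fun b => g (dist a b))]
  have hpre : stmt0ψ.symm ⁻¹' D' = {q : ℝ × ℝ | q.2 < 0 ∧ 0 ≤ p.2 * q.1 - q.2 * p.1 ∧
      p.2 * q.1 - q.2 * p.1 ≤ ℓ * (p.2 - q.2)} := by
    ext q; exact Iff.rfl
  rw [hpre]
  have hdist : ∀ q : ℝ × ℝ, g (dist a (stmt0ψ.symm q)) =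
      g (Real.sqrt ((p.1 - q.1)^2 + (p.2 - q.2)^2)) := by
    intro q; rw [ha_def, stmt0_dist_symm]
  calc ∫⁻ q in {q : ℝ × ℝ | q.2 < 0 ∧ 0 ≤ p.2 * q.1 - q.2 * p.1 ∧
        p.2 * q.1 - q.2 * p.1 ≤ ℓ * (p.2 - q.2)}, g (dist a (stmt0ψ.symm q))
      = ∫⁻ q in {q : ℝ × ℝ | q.2 < 0 ∧ 0 ≤ p.2 * q.1 - q.2 * p.1 ∧
        p.2 * q.1 - q.2 * p.1 ≤ ℓ * (p.2 - q.2)},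
          g (Real.sqrt ((p.1 - q.1)^2 + (p.2 - q.2)^2)) := lintegral_congr fun q => hdist q
    _ = ∫⁻ q, Set.indicator {q : ℝ × ℝ | q.2 < 0 ∧ 0 ≤ p.2 * q.1 - q.2 * p.1 ∧
        p.2 * q.1 - q.2 * p.1 ≤ ℓ * (p.2 - q.2)}
          (fun q => g (Real.sqrt ((p.1 - q.1)^2 + (p.2 - q.2)^2))) q :=
        (lintegral_indicator hTm _).symm
    _ = ∫⁻ w, Set.indicator {q : ℝ × ℝ | q.2 < 0 ∧ 0 ≤ p.2 * q.1 - q.2 * p.1 ∧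
        p.2 * q.1 - q.2 * p.1 ≤ ℓ * (p.2 - q.2)}
          (fun q => g (Real.sqrt ((p.1 - q.1)^2 + (p.2 - q.2)^2))) (p + w) :=
        (lintegral_add_left_eq_self _ p).symm
    _ = ∫⁻ w : ℝ × ℝ, Set.indicator {w : ℝ × ℝ | w.2 < -p.2 ∧ 0 ≤ p.2 * w.1 - p.1 * w.2 ∧
        p.2 * w.1 - p.1 * w.2 ≤ -(ℓ * w.2)}
          (fun w => g (Real.sqrt (w.1^2 + w.2^2))) w := by
        refine lintegral_congr fun w => ?_
        have hmem : (p + w) ∈ {q : ℝ × ℝ | q.2 < 0 ∧ 0 ≤ p.2 * q.1 - q.2 * p.1 ∧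
            p.2 * q.1 - q.2 * p.1 ≤ ℓ * (p.2 - q.2)} ↔
            w ∈ {w : ℝ × ℝ | w.2 < -p.2 ∧ 0 ≤ p.2 * w.1 - p.1 * w.2 ∧
            p.2 * w.1 - p.1 * w.2 ≤ -(ℓ * w.2)} := by
          simp only [mem_setOf_eq, Prod.fst_add, Prod.snd_add]
          constructor
          · rintro ⟨h1, h2, h3⟩
            exact ⟨by linarith, by nlinarith [h2], by nlinarith [h3]⟩
          · rintro ⟨h1, h2, h3⟩
            exact ⟨by linarith, by nlinarith [h2], by nlinarith [h3]⟩
        have hval : g (Real.sqrt ((p.1 - (p + w).1)^2 + (p.2 - (p + w).2)^2)) =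
            g (Real.sqrt (w.1^2 + w.2^2)) := by
          congr 1
          rw [show (p.1 - (p + w).1)^2 + (p.2 - (p + w).2)^2 = w.1^2 + w.2^2 by
            simp only [Prod.fst_add, Prod.snd_add]; ring]
        by_cases h : (p + w) ∈ {q : ℝ × ℝ | q.2 < 0 ∧ 0 ≤ p.2 * q.1 - q.2 * p.1 ∧
            p.2 * q.1 - q.2 * p.1 ≤ ℓ * (p.2 - q.2)}
        · rw [indicator_of_mem h, indicator_of_mem (hmem.mp h), hval]
        · rw [indicator_of_notMem h, indicator_of_notMem (fun hw => h (hmem.mpr hw))]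


/-- For `ℓ > 0` and measurable `g : [0,∞) → [0,∞]`,
`∫_{a ∈ ℝ×(0,∞)} ∫_{b ∈ D(ℓ,a)} g(|a−b|) db da = 2ℓ ∫_0^∞ r² g(r) dr`,
where `D(ℓ,a)` is the set of `b ∈ ℝ²` such that the segment `[a,b]` meets the
segment from the origin to `(ℓ,0)`. -/
theorem stmt0 (ℓ : ℝ) (hℓ : 0 < ℓ) (g : ℝ → ℝ≥0∞) (hg : Measurable g) :
    ∫⁻ a in {a : EuclideanSpace ℝ (Fin 2) | 0 < a 1},
      ∫⁻ b in {b : EuclideanSpace ℝ (Fin 2) |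
          (segment ℝ a b ∩ segment ℝ 0 (EuclideanSpace.single 0 ℓ)).Nonempty},
        g (dist a b) =
      ENNReal.ofReal (2 * ℓ) * ∫⁻ r in Set.Ioi (0 : ℝ), ENNReal.ofReal (r ^ 2) * g r := by
  have hGm : Measurable fun w : ℝ × ℝ => g (Real.sqrt (w.1^2 + w.2^2)) := by
    apply hg.comp
    fun_prop
  have hS : MeasurableSet {a : EuclideanSpace ℝ (Fin 2) | 0 < a 1} := by
    have : {a : EuclideanSpace ℝ (Fin 2) | 0 < a 1} =
        stmt0ψ ⁻¹' {p : ℝ × ℝ | 0 < p.2} := by ext a; exact Iff.rfl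
    rw [this]
    exact stmt0ψ.measurable (measurableSet_lt measurable_const measurable_snd)
  have hU : MeasurableSet {p : ℝ × ℝ | 0 < p.2} :=
    measurableSet_lt measurable_const measurable_snd
  rw [stmt0_transfer _ hS]
  have hpre : stmt0ψ.symm ⁻¹' {a : EuclideanSpace ℝ (Fin 2) | 0 < a 1} =
      {p : ℝ × ℝ | 0 < p.2} := by ext p; exact Iff.rfl
  rw [hpre]
  rw [setLIntegral_congr_fun hU (fun p hp => stmt0_key ℓ hℓ g hg p hp)]
  -- big 4d set
  set S₄ : Set ((ℝ × ℝ) × (ℝ × ℝ)) := {z | 0 < z.1.2 ∧ z.1.2 < -z.2.2 ∧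
    0 ≤ z.1.2 * z.2.1 - z.1.1 * z.2.2 ∧ z.1.2 * z.2.1 - z.1.1 * z.2.2 ≤ -(ℓ * z.2.2)}
    with hS₄def
  have hS₄m : MeasurableSet S₄ := by
    have heq : S₄ = {z : (ℝ × ℝ) × (ℝ × ℝ) | 0 < z.1.2} ∩
        ({z : (ℝ × ℝ) × (ℝ × ℝ) | z.1.2 < -z.2.2} ∩
          ({z : (ℝ × ℝ) × (ℝ × ℝ) | 0 ≤ z.1.2 * z.2.1 - z.1.1 * z.2.2} ∩
            {z : (ℝ × ℝ) × (ℝ × ℝ) | z.1.2 * z.2.1 - z.1.1 * z.2.2 ≤ -(ℓ * z.2.2)})) := rfl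
    rw [heq]
    exact (measurableSet_lt measurable_const (by fun_prop)).inter
      ((measurableSet_lt (by fun_prop) (by fun_prop)).inter
        ((measurableSet_le measurable_const (by fun_prop)).inter
          (measurableSet_le (by fun_prop) (by fun_prop))))
  have hJm : ∀ w : ℝ × ℝ, MeasurableSet {p : ℝ × ℝ | 0 < p.2 ∧ p.2 < -w.2 ∧
      0 ≤ p.2 * w.1 - p.1 * w.2 ∧ p.2 * w.1 - p.1 * w.2 ≤ -(ℓ * w.2)} := by
    intro w
    have heq : {p : ℝ × ℝ | 0 < p.2 ∧ p.2 < -w.2 ∧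
        0 ≤ p.2 * w.1 - p.1 * w.2 ∧ p.2 * w.1 - p.1 * w.2 ≤ -(ℓ * w.2)} =
        {p : ℝ × ℝ | 0 < p.2} ∩ ({p : ℝ × ℝ | p.2 < -w.2} ∩
          ({p : ℝ × ℝ | 0 ≤ p.2 * w.1 - p.1 * w.2} ∩
            {p : ℝ × ℝ | p.2 * w.1 - p.1 * w.2 ≤ -(ℓ * w.2)})) := rfl
    rw [heq]
    exact (measurableSet_lt measurable_const measurable_snd).inter
      ((measurableSet_lt measurable_snd measurable_const).inter
        ((measurableSet_le measurable_const (by fun_prop)).inter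
          (measurableSet_le (by fun_prop) measurable_const)))
  -- merge the outer indicator
  have step1 : ∫⁻ p in {p : ℝ × ℝ | 0 < p.2},
      ∫⁻ w : ℝ × ℝ, Set.indicator {w : ℝ × ℝ | w.2 < -p.2 ∧ 0 ≤ p.2 * w.1 - p.1 * w.2 ∧
          p.2 * w.1 - p.1 * w.2 ≤ -(ℓ * w.2)}
        (fun w => g (Real.sqrt (w.1^2 + w.2^2))) w =
      ∫⁻ p : ℝ × ℝ, ∫⁻ w : ℝ × ℝ,
        S₄.indicator (fun z => g (Real.sqrt (z.2.1^2 + z.2.2^2))) (p, w) := by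
    rw [← lintegral_indicator hU]
    refine lintegral_congr fun p => ?_
    by_cases hp : 0 < p.2
    · rw [indicator_of_mem (by exact hp)]
      refine lintegral_congr fun w => ?_
      have hiff : w ∈ {w : ℝ × ℝ | w.2 < -p.2 ∧ 0 ≤ p.2 * w.1 - p.1 * w.2 ∧
          p.2 * w.1 - p.1 * w.2 ≤ -(ℓ * w.2)} ↔ (p, w) ∈ S₄ := by
        simp only [hS₄def, mem_setOf_eq]
        constructor
        · rintro ⟨h1, h2, h3⟩; exact ⟨hp, by linarith, h2, h3⟩
        · rintro ⟨-, h1, h2, h3⟩; exact ⟨by linarith, h2, h3⟩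
      by_cases h : (p, w) ∈ S₄
      · rw [indicator_of_mem (hiff.mpr h), indicator_of_mem h]
      · rw [indicator_of_notMem (fun hw => h (hiff.mp hw)), indicator_of_notMem h]
    · rw [indicator_of_notMem (by exact hp)]
      symm
      calc (∫⁻ w : ℝ × ℝ, S₄.indicator (fun z => g (Real.sqrt (z.2.1^2 + z.2.2^2))) (p, w))
          = ∫⁻ _ : ℝ × ℝ, 0 :=
            lintegral_congr fun w => indicator_of_notMem (fun hz => hp hz.1) _
        _ = 0 := lintegral_zero
  rw [step1]
  rw [lintegral_lintegral_swap (f := fun p w =>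
      S₄.indicator (fun z => g (Real.sqrt (z.2.1^2 + z.2.2^2))) (p, w))
    ((hGm.comp measurable_snd).indicator hS₄m).aemeasurable]
  have step2 : ∀ w : ℝ × ℝ,
      (∫⁻ p : ℝ × ℝ, S₄.indicator (fun z => g (Real.sqrt (z.2.1^2 + z.2.2^2))) (p, w)) =
      {w : ℝ × ℝ | w.2 < 0}.indicator
        (fun w => ENNReal.ofReal ℓ * (ENNReal.ofReal (-w.2) *
          g (Real.sqrt (w.1^2 + w.2^2)))) w := by
    intro w
    have hpt : ∀ p : ℝ × ℝ, S₄.indicator (fun z => g (Real.sqrt (z.2.1^2 + z.2.2^2))) (p, w) =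
        g (Real.sqrt (w.1^2 + w.2^2)) *
          Set.indicator {p : ℝ × ℝ | 0 < p.2 ∧ p.2 < -w.2 ∧
            0 ≤ p.2 * w.1 - p.1 * w.2 ∧ p.2 * w.1 - p.1 * w.2 ≤ -(ℓ * w.2)}
            (fun _ => (1:ℝ≥0∞)) p := by
      intro p
      by_cases h : (p, w) ∈ S₄
      · rw [indicator_of_mem h, indicator_of_mem (by exact h), mul_one]
      · rw [indicator_of_notMem h, indicator_of_notMem (by exact h), mul_zero]
    simp only [hpt]
    rw [lintegral_const_mul _ (measurable_const.indicator (hJm w)), stmt0_Jcalc ℓ hℓ w]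
    by_cases hw : w.2 < 0
    · rw [indicator_of_mem (by exact hw), indicator_of_mem (by exact hw)]
      ring
    · rw [indicator_of_notMem (by exact hw), indicator_of_notMem (by exact hw), mul_zero]
  simp only [step2]
  rw [lintegral_indicator (measurableSet_lt measurable_snd measurable_const)]
  rw [lintegral_const_mul _ (by fun_prop : Measurable fun w : ℝ × ℝ =>
    ENNReal.ofReal (-w.2) * g (Real.sqrt (w.1^2 + w.2^2)))]
  rw [stmt0_Kcalc g hg]
  rw [ENNReal.ofReal_mul zero_le_two, ENNReal.ofReal_ofNat]
  ring
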